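/- Let n ≥ 2 and let X be an n-Urysohn homogeneous space. Then |X| ≤ 2^{c(X)·πχ(X)}. -/

import Mathlib

open Cardinal Set

/-- The cellularity of `X`: the supremum of the cardinalities of pairwise
disjoint families of nonempty open sets, taken at least `ℵ₀`. -/
noncomputable def cellularity (X : Type u) [TopologicalSpace X] : Cardinal.{u} :=
  max ℵ₀ (⨆ 𝒰 : {𝒰 : Set (Set X) //
    (∀ U ∈ 𝒰, IsOpen U ∧ U.Nonempty) ∧ 𝒰.PairwiseDisjoint id}, #𝒰.1)

/-- `B` is a local π-base at `x`: a family of nonempty open sets such that every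
open neighbourhood of `x` contains a member of `B`. -/
def IsLocalPiBase {X : Type u} [TopologicalSpace X] (x : X) (B : Set (Set X)) : Prop :=
  (∀ U ∈ B, IsOpen U ∧ U.Nonempty) ∧ ∀ V : Set X, IsOpen V → x ∈ V → ∃ U ∈ B, U ⊆ V

/-- The π-character of `X`: the supremum over `x ∈ X` of the least cardinality
of a local π-base at `x`, taken at least `ℵ₀`. -/
noncomputable def piCharacter (X : Type u) [TopologicalSpace X] : Cardinal.{u} :=
  max ℵ₀ (⨆ x : X, sInf {κ | ∃ B : Set (Set X), IsLocalPiBase x B ∧ #B = κ})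

/-- A space is homogeneous if for all `x, y` some self-homeomorphism maps `x`
to `y`. -/
def Homogeneous (X : Type*) [TopologicalSpace X] : Prop :=
  ∀ x y : X, ∃ h : X ≃ₜ X, h x = y

/-- A space is `n`-Urysohn if any `n` distinct points admit open
neighbourhoods whose closures have empty total intersection. -/
def NUrysohn (n : ℕ) (X : Type*) [TopologicalSpace X] : Prop :=
  ∀ f : Fin n ↪ X, ∃ U : Fin n → Set X,
    (∀ i, IsOpen (U i) ∧ f i ∈ U i) ∧ ⋂ i, closure (U i) = ∅

section
open Order
open scoped Classical
universe u

section ER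

variable {T ι : Type u} [LinearOrder T] [WellFoundedLT T]

/-- Candidate set for the Erdős–Rado recursion. -/
def ERcand (C : T → T → ι) (b : T) {Θ : Type u} [LT Θ] (ξ : Θ)
    (f : ∀ η : Θ, η < ξ → T) : Set T :=
  {a | ∀ η (hη : η < ξ), a ≠ f η hη ∧ C (f η hη) a = C (f η hη) b}

/-- The Erdős–Rado recursion: at each step pick the least element compatible with `b`. -/
noncomputable def ERseq (C : T → T → ι) (b : T) {Θ : Type u} [LinearOrder Θ]
    [WellFoundedLT Θ] : Θ → T :=
  WellFounded.fix wellFounded_lt fun ξ ih =>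
    if h : (ERcand C b ξ ih).Nonempty then (wellFounded_lt (α := T)).min _ h else b

theorem ERseq_eq (C : T → T → ι) (b : T) {Θ : Type u} [LinearOrder Θ] [WellFoundedLT Θ]
    (ξ : Θ) :
    ERseq C b ξ = if h : (ERcand C b ξ (fun η _ => ERseq C b η)).Nonempty then
      (wellFounded_lt (α := T)).min _ h else b := by
  unfold ERseq
  exact WellFounded.fix_eq _ _ _

theorem my_erdos_rado (κ : Cardinal.{u}) (hκ : ℵ₀ ≤ κ) (hι : #ι ≤ κ)
    (hT : Order.succ (2 ^ κ) ≤ #T)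
    (C : T → T → ι) (hC : ∀ u v, C u v = C v u) :
    ∃ (S : Set T) (c : ι), Order.succ κ ≤ #S ∧
      ∀ u ∈ S, ∀ v ∈ S, u ≠ v → C u v = c := by
  classical
  set Θ := (Order.succ κ).ord.ToType with hΘdef
  have hΘcard : #Θ = Order.succ κ := by
    rw [hΘdef, Cardinal.mk_toType, Cardinal.card_ord]
  have hx_spec : ∀ (b : T) (η : Θ),
      (ERcand C b η (fun η' _ => ERseq C b η')).Nonempty →
      ERseq C b η ∈ ERcand C b η (fun η' _ => ERseq C b η') ∧
        ∀ a ∈ ERcand C b η (fun η' _ => ERseq C b η'), ¬ a < ERseq C b η := by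
    intro b η hne
    have heq := ERseq_eq C b η
    rw [dif_pos hne] at heq
    rw [heq]
    exact ⟨WellFounded.min_mem _ _ _, fun a ha => WellFounded.not_lt_min _ _ ha⟩
  by_cases hcase : ∃ b : T, ∀ ξ : Θ, ERseq C b ξ ≠ b
  · obtain ⟨b, hb⟩ := hcase
    set x : Θ → T := ERseq C b with hxdef
    have hgood : ∀ ξ : Θ, (ERcand C b ξ (fun η _ => x η)).Nonempty := by
      intro ξ
      exact ⟨b, fun η hη => ⟨fun h => hb η h.symm, rfl⟩⟩
    have hmem : ∀ ξ : Θ, x ξ ∈ ERcand C b ξ (fun η _ => x η) := fun ξ =>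
      (hx_spec b ξ (hgood ξ)).1
    have hne : ∀ η ξ : Θ, η < ξ → x ξ ≠ x η ∧ C (x η) (x ξ) = C (x η) b := by
      intro η ξ h
      exact hmem ξ η h
    have hinj : Function.Injective x := by
      intro ξ η h
      by_contra hne'
      rcases lt_or_gt_of_ne hne' with h1 | h1
      · exact (hne ξ η h1).1 h.symm
      · exact (hne η ξ h1).1 h
    set g : Θ → ι := fun ξ => C (x ξ) b with hgdef
    have hclass : ∃ c : ι, ¬ (#{ξ : Θ | g ξ = c} ≤ κ) := by
      by_contra hcon
      push_neg at hcon
      have hcover : (univ : Set Θ) ⊆ ⋃ c : ι, {ξ : Θ | g ξ = c} := by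
        intro ξ _
        exact mem_iUnion.2 ⟨g ξ, rfl⟩
      have h1 : #Θ ≤ κ := by
        calc #Θ = #(univ : Set Θ) := Cardinal.mk_univ.symm
          _ ≤ #(⋃ c : ι, {ξ : Θ | g ξ = c}) := Cardinal.mk_le_mk_of_subset hcover
          _ ≤ #ι * ⨆ c : ι, #{ξ : Θ | g ξ = c} := Cardinal.mk_iUnion_le _
          _ ≤ κ * κ := mul_le_mul' hι (ciSup_le' hcon)
          _ = κ := mul_eq_self hκ
      rw [hΘcard] at h1
      exact absurd (Order.succ_le_iff.mp h1) (lt_irrefl κ)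
    obtain ⟨c, hc⟩ := hclass
    replace hc : Order.succ κ ≤ #{ξ : Θ | g ξ = c} := Order.succ_le_of_lt (not_le.1 hc)
    refine ⟨x '' {ξ : Θ | g ξ = c}, c, ?_, ?_⟩
    · rwa [Cardinal.mk_image_eq_of_injOn x _ hinj.injOn]
    · rintro u ⟨ξ, hξ, rfl⟩ v ⟨η, hη, rfl⟩ huv
      have hξη : ξ ≠ η := fun h => huv (by rw [h])
      rcases lt_or_gt_of_ne hξη with h1 | h1
      · rw [(hne ξ η h1).2]
        exact hξ
      · rw [hC, (hne η ξ h1).2]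
        exact hη
  · exfalso
    push_neg at hcase
    have hσex : ∀ b : T, ({ξ : Θ | ERseq C b ξ = b}).Nonempty := hcase
    set σ : T → Θ := fun b => (wellFounded_lt (α := Θ)).min _ (hσex b) with hσdef
    have hσeq : ∀ b, ERseq C b (σ b) = b := fun b =>
      WellFounded.min_mem _ _ (hσex b)
    have hσmin : ∀ b (η : Θ), η < σ b → ERseq C b η ≠ b := by
      intro b η hη h
      exact WellFounded.not_lt_min (wellFounded_lt (α := Θ)) {ξ : Θ | ERseq C b ξ = b} (h : η ∈ {ξ : Θ | ERseq C b ξ = b}) hη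
    have hgood : ∀ b (η : Θ), η ≤ σ b →
        (ERcand C b η (fun η' _ => ERseq C b η')).Nonempty := by
      intro b η hη
      refine ⟨b, fun η' hη' => ⟨?_, rfl⟩⟩
      exact fun h => hσmin b η' (lt_of_lt_of_le hη' hη) h.symm
    -- injection into small type
    set Φ : T → Σ ξ : Θ, ({η : Θ // η < ξ} → ι) :=
      fun b => ⟨σ b, fun η => C (ERseq C b η.1) b⟩ with hΦdef
    have hΦinj : Function.Injective Φ := by
      intro b b' h
      have h1 : σ b = σ b' := congrArg Sigma.fst h
      have h2 : HEq (fun η : {η : Θ // η < σ b} => C (ERseq C b η.1) b)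
          (fun η : {η : Θ // η < σ b'} => C (ERseq C b' η.1) b') :=
        (Sigma.mk.inj_iff.mp h).2
      rw [← h1] at h2
      have h2' := eq_of_heq h2
      have hcol : ∀ (η : Θ), η < σ b → C (ERseq C b η) b = C (ERseq C b' η) b' := by
        intro η hη
        exact congrFun h2' ⟨η, hη⟩
      have hsame : ∀ η : Θ, η ≤ σ b → ERseq C b η = ERseq C b' η := by
        intro η
        induction η using WellFoundedLT.induction with
        | ind η IH =>
          intro hη
          have hset : ERcand C b η (fun η' _ => ERseq C b η') =
              ERcand C b' η (fun η' _ => ERseq C b' η') := by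
            ext a
            simp only [ERcand, mem_setOf_eq]
            constructor
            · intro ha η' hη'
              have hlt := lt_of_lt_of_le hη' hη
              have hIH := IH η' hη' hlt.le
              rw [← hcol η' hlt, ← hIH]
              exact ha η' hη'
            · intro ha η' hη'
              have hlt := lt_of_lt_of_le hη' hη
              have hIH := IH η' hη' hlt.le
              rw [hcol η' hlt, hIH]
              exact ha η' hη'
          have hg1 := hgood b η hη
          have hg2 := hgood b' η (by rw [← h1]; exact hη)
          obtain ⟨hm1, hlt1⟩ := hx_spec b η hg1
          obtain ⟨hm2, hlt2⟩ := hx_spec b' η hg2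
          have hm1' : ERseq C b η ∈ ERcand C b' η (fun η' _ => ERseq C b' η') := by
            rwa [← hset]
          have hm2' : ERseq C b' η ∈ ERcand C b η (fun η' _ => ERseq C b η') := by
            rwa [hset]
          exact le_antisymm (not_lt.1 (hlt1 _ hm2')) (not_lt.1 (hlt2 _ hm1'))
      calc b = ERseq C b (σ b) := (hσeq b).symm
        _ = ERseq C b' (σ b) := hsame (σ b) le_rfl
        _ = ERseq C b' (σ b') := by rw [h1]
        _ = b' := hσeq b'
    have hbound : ∀ ξ : Θ, #({η : Θ // η < ξ} → ι) ≤ 2 ^ κ := by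
      intro ξ
      have h1 : #{η : Θ // η < ξ} ≤ κ := by
        have h2 : #(Iio ξ) < Order.succ κ := Cardinal.mk_Iio_ord_toType ξ
        rw [Order.lt_succ_iff] at h2
        exact h2
      calc #({η : Θ // η < ξ} → ι)
          = lift.{u} #ι ^ lift.{u} #{η : Θ // η < ξ} := Cardinal.mk_arrow _ _
        _ = #ι ^ #{η : Θ // η < ξ} := by rw [Cardinal.lift_id, Cardinal.lift_id]
        _ ≤ κ ^ #{η : Θ // η < ξ} := Cardinal.power_le_power_right hι
        _ ≤ κ ^ κ := Cardinal.power_le_power_left (aleph0_pos.trans_le hκ).ne' h1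
        _ = 2 ^ κ := Cardinal.power_self_eq hκ
    have hTbound : #T ≤ 2 ^ κ := by
      calc #T ≤ #(Σ ξ : Θ, ({η : Θ // η < ξ} → ι)) := Cardinal.mk_le_of_injective hΦinj
        _ = Cardinal.sum (fun ξ : Θ => #({η : Θ // η < ξ} → ι)) := Cardinal.mk_sigma _
        _ ≤ Cardinal.sum (fun _ : Θ => 2 ^ κ) := Cardinal.sum_le_sum _ _ hbound
        _ = #Θ * 2 ^ κ := Cardinal.sum_const' _ _
        _ = Order.succ κ * 2 ^ κ := by rw [hΘcard]
        _ ≤ 2 ^ κ * 2 ^ κ := mul_le_mul_left (Order.succ_le_of_lt (Cardinal.cantor κ)) _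
        _ = 2 ^ κ := by rw [← Cardinal.power_add, Cardinal.add_eq_self hκ]
    have : 2 ^ κ < #T := lt_of_lt_of_le (Order.lt_succ _) hT
    exact absurd hTbound (not_le.2 this)

end ER

section Step1
variable {X T ι : Type u} [TopologicalSpace X] [LinearOrder T] [WellFoundedLT T]

theorem exists_theta_dense_aux (κ : Cardinal.{u}) (hκ : ℵ₀ ≤ κ)
    (hcellκ : ∀ 𝒰 : Set (Set X), (∀ U ∈ 𝒰, IsOpen U ∧ U.Nonempty) →
      𝒰.PairwiseDisjoint id → #𝒰 ≤ κ)
    (hι : #ι ≤ κ) (hιne : Nonempty ι)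
    (hπ : ∀ z : X, ∃ e : ι → Set X, (∀ i, IsOpen (e i) ∧ (e i).Nonempty) ∧
      (∀ V : Set X, IsOpen V → z ∈ V → ∃ i, e i ⊆ V))
    (hsmall : ∀ t : T, #{s : T // s < t} ≤ 2 ^ κ)
    (hTbig : Order.succ (2 ^ κ) ≤ #T) :
    ∃ D : Set X, #D ≤ 2 ^ κ ∧ ∀ U : Set X, IsOpen U → U.Nonempty →
      (closure U ∩ D).Nonempty := by
  classical
  by_contra hcon
  push_neg at hcon
  choose e he1 he2 using hπ
  -- the transfinite sequence of bad open sets with points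
  have hstep : ∀ (t : T) (ih : ∀ s : T, s < t → X × Set X),
      ∃ zU : X × Set X, IsOpen zU.2 ∧ zU.1 ∈ zU.2 ∧
        closure zU.2 ∩ (range fun p : {s : T // s < t} => (ih p.1 p.2).1) = ∅ := by
    intro t ih
    set D := range fun p : {s : T // s < t} => (ih p.1 p.2).1 with hDdef
    have hDcard : #D ≤ 2 ^ κ := le_trans Cardinal.mk_range_le (hsmall t)
    obtain ⟨U, hUopen, hUne, hUD⟩ := hcon D hDcard
    obtain ⟨z, hz⟩ := hUne
    exact ⟨(z, U), hUopen, hz, hUD⟩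
  set F : T → X × Set X := WellFounded.fix wellFounded_lt
    (fun t ih => (hstep t ih).choose) with hFdef
  have hFeq : ∀ t, F t = (hstep t (fun s _ => F s)).choose := by
    intro t
    rw [hFdef]
    exact WellFounded.fix_eq _ _ _
  have hP : ∀ t : T, IsOpen (F t).2 ∧ (F t).1 ∈ (F t).2 ∧
      closure (F t).2 ∩ (range fun p : {s : T // s < t} => (F p.1).1) = ∅ := by
    intro t
    have h := (hstep t (fun s _ => F s)).choose_spec
    rw [← hFeq t] at h
    exact h
  -- colors
  have hcol : ∀ s t : T, s < t →
      ∃ i : ι, e (F s).1 i ⊆ (F s).2 ∧ e (F s).1 i ∩ (F t).2 = ∅ := by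
    intro s t hst
    have hxs : (F s).1 ∉ closure (F t).2 := by
      intro hmem
      have h0 := (hP t).2.2
      have h1 : (F s).1 ∈ closure (F t).2 ∩
          (range fun p : {s' : T // s' < t} => (F p.1).1) := ⟨hmem, ⟨⟨s, hst⟩, rfl⟩⟩
      rw [h0] at h1
      exact h1
    rw [mem_closure_iff] at hxs
    push_neg at hxs
    obtain ⟨W, hWopen, hWmem, hWint⟩ := hxs
    have hWe : W ∩ (F t).2 = ∅ := hWint
    obtain ⟨i, hi⟩ := he2 (F s).1 (W ∩ (F s).2) (hWopen.inter (hP s).1)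
      ⟨hWmem, (hP s).2.1⟩
    refine ⟨i, (hi.trans inter_subset_right), ?_⟩
    have hsub : e (F s).1 i ∩ (F t).2 ⊆ W ∩ (F t).2 := fun a ha => ⟨(hi ha.1).1, ha.2⟩
    rw [hWe] at hsub
    exact subset_empty_iff.1 hsub
  set C : T → T → ι := fun s t =>
    if h : ∃ i : ι, e (F s).1 i ⊆ (F s).2 ∧ e (F s).1 i ∩ (F t).2 = ∅ then h.choose
    else Classical.arbitrary ι with hCdef
  have hCspec : ∀ s t : T, s < t →
      e (F s).1 (C s t) ⊆ (F s).2 ∧ e (F s).1 (C s t) ∩ (F t).2 = ∅ := by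
    intro s t hst
    have h := hcol s t hst
    simp only [hCdef, dif_pos h]
    exact h.choose_spec
  set C' : T → T → ι := fun u v => C (min u v) (max u v) with hC'def
  have hC'sym : ∀ u v, C' u v = C' v u := by
    intro u v
    simp only [hC'def]
    rw [inf_comm v u, sup_comm v u]
  obtain ⟨S, i₀, hScard, hSmono⟩ := my_erdos_rado κ hκ hι hTbig C' hC'sym
  have hSpair : ∀ s ∈ S, ∀ t ∈ S, s < t → C s t = i₀ := by
    intro s hs t ht hst
    have h := hSmono s hs t ht hst.ne
    simp only [hC'def] at h
    rwa [inf_eq_left.mpr hst.le, sup_eq_right.mpr hst.le] at h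
  -- drop a possible maximum
  set S₁ : Set T := {s ∈ S | ∃ t ∈ S, s < t} with hS₁def
  have hS₁card : Order.succ κ ≤ #S₁ := by
    by_contra hS₁
    push_neg at hS₁
    have hsub : S ⊆ S₁ ∪ (S \ S₁) := fun s hs => by
      by_cases h : s ∈ S₁
      · exact Or.inl h
      · exact Or.inr ⟨hs, h⟩
    have hss : (S \ S₁).Subsingleton := by
      intro a ha b hb
      by_contra hab
      rcases lt_or_gt_of_ne hab with h1 | h1
      · exact ha.2 ⟨ha.1, b, hb.1, h1⟩
      · exact hb.2 ⟨hb.1, a, ha.1, h1⟩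
    have h2 : #S ≤ #S₁ + #(S \ S₁ : Set T) := by
      refine le_trans (Cardinal.mk_le_mk_of_subset hsub) ?_
      exact Cardinal.mk_union_le _ _
    have h3 : #S ≤ κ := by
      refine le_trans h2 ?_
      have := Cardinal.mk_le_one_iff_set_subsingleton.2 hss
      calc #S₁ + #(S \ S₁ : Set T) ≤ κ + 1 :=
            add_le_add (Order.lt_succ_iff.mp hS₁) this
        _ ≤ κ + κ := add_le_add le_rfl (le_trans one_le_aleph0 hκ)
        _ = κ := Cardinal.add_eq_self hκ
    rw [← not_lt] at h3
    exact h3 (lt_of_lt_of_le (Order.lt_succ κ) hScard)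
  -- the cellular family
  have hkey : ∀ s ∈ S₁, e (F s).1 i₀ ⊆ (F s).2 ∧ (e (F s).1 i₀).Nonempty ∧
      IsOpen (e (F s).1 i₀) := by
    intro s hs
    obtain ⟨hsS, t, htS, hst⟩ := hs
    have h := hCspec s t hst
    rw [hSpair s hsS t htS hst] at h
    exact ⟨h.1, (he1 (F s).1 i₀).2, (he1 (F s).1 i₀).1⟩
  have hdisj : ∀ s ∈ S₁, ∀ t ∈ S₁, s < t → e (F s).1 i₀ ∩ e (F t).1 i₀ = ∅ := by
    intro s hs t ht hst
    have h := hCspec s t hst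
    rw [hSpair s hs.1 t ht.1 hst] at h
    have h2 := (hkey t ht).1
    have hsub : e (F s).1 i₀ ∩ e (F t).1 i₀ ⊆ e (F s).1 i₀ ∩ (F t).2 :=
      fun a ha => ⟨ha.1, h2 ha.2⟩
    rw [h.2] at hsub
    exact subset_empty_iff.1 hsub
  set 𝒰 : Set (Set X) := (fun s => e (F s).1 i₀) '' S₁ with h𝒰def
  have h𝒰props : ∀ U ∈ 𝒰, IsOpen U ∧ U.Nonempty := by
    rintro U ⟨s, hs, rfl⟩
    exact ⟨(hkey s hs).2.2, (hkey s hs).2.1⟩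
  have h𝒰disj : 𝒰.PairwiseDisjoint id := by
    rintro U ⟨s, hs, rfl⟩ V ⟨t, ht, rfl⟩ hUV
    have hst : s ≠ t := fun h => hUV (by rw [h])
    rw [Function.onFun, disjoint_iff_inter_eq_empty]
    rcases lt_or_gt_of_ne hst with h1 | h1
    · exact hdisj s hs t ht h1
    · rw [inter_comm]
      exact hdisj t ht s hs h1
  have hinj : InjOn (fun s => e (F s).1 i₀) S₁ := by
    intro s hs t ht h
    have h' : e (F s).1 i₀ = e (F t).1 i₀ := h
    by_contra hst
    rcases lt_or_gt_of_ne hst with h1 | h1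
    · have := hdisj s hs t ht h1
      rw [h', inter_self] at this
      exact (hkey t ht).2.1.ne_empty this
    · have := hdisj t ht s hs h1
      rw [← h', inter_self] at this
      exact (hkey s hs).2.1.ne_empty this
  have h𝒰card : Order.succ κ ≤ #𝒰 := by
    rw [h𝒰def, Cardinal.mk_image_eq_of_injOn _ _ hinj]
    exact hS₁card
  have := hcellκ 𝒰 h𝒰props h𝒰disj
  exact absurd (lt_of_lt_of_le (Order.lt_succ κ) (le_trans h𝒰card this)) (lt_irrefl κ)
end Step1

end

section Helpers

theorem exists_small_piBase {X : Type u} [TopologicalSpace X] (x : X) :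
    ∃ B : Set (Set X), IsLocalPiBase x B ∧ #B ≤ piCharacter X := by
  have hne : {κ | ∃ B : Set (Set X), IsLocalPiBase x B ∧ #B = κ}.Nonempty := by
    refine ⟨#{U : Set X | IsOpen U ∧ U.Nonempty}, {U | IsOpen U ∧ U.Nonempty},
      ⟨fun U hU => hU, fun V hV hxV => ⟨V, ⟨hV, ⟨x, hxV⟩⟩, subset_rfl⟩⟩, rfl⟩
  obtain ⟨B, hB, hBcard⟩ := csInf_mem hne
  refine ⟨B, hB, ?_⟩
  rw [hBcard]
  refine le_trans ?_ (le_max_right _ _)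
  exact le_ciSup (Cardinal.bddAbove_range _) x

theorem mk_le_cellularity {X : Type u} [TopologicalSpace X] {𝒰 : Set (Set X)}
    (h1 : ∀ U ∈ 𝒰, IsOpen U ∧ U.Nonempty) (h2 : 𝒰.PairwiseDisjoint id) :
    #𝒰 ≤ cellularity X := by
  refine le_trans ?_ (le_max_right _ _)
  exact le_ciSup (Cardinal.bddAbove_range
    (fun 𝒱 : {𝒰 : Set (Set X) //
      (∀ U ∈ 𝒰, IsOpen U ∧ U.Nonempty) ∧ 𝒰.PairwiseDisjoint id} => #𝒱.1)) ⟨𝒰, h1, h2⟩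

end Helpers

theorem stmt13 (n : ℕ) (hn : 2 ≤ n) (X : Type u) [TopologicalSpace X]
    (hX : NUrysohn n X) (hhom : Homogeneous X) :
    #X ≤ 2 ^ (cellularity X * piCharacter X) := by
  classical
  set κ := cellularity X * piCharacter X with hκdef
  have hcell0 : ℵ₀ ≤ cellularity X := le_max_left _ _
  have hpich0 : ℵ₀ ≤ piCharacter X := le_max_left _ _
  have hpichne : piCharacter X ≠ 0 := (aleph0_pos.trans_le hpich0).ne'
  have hcellne : cellularity X ≠ 0 := (aleph0_pos.trans_le hcell0).ne'
  have hcellκ : cellularity X ≤ κ := Cardinal.le_mul_right hpichne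
  have hpichκ : piCharacter X ≤ κ := Cardinal.le_mul_left hcellne
  have hκ : ℵ₀ ≤ κ := le_trans hcell0 hcellκ
  rcases isEmpty_or_nonempty X with hX0 | hX0
  · have : #X = 0 := Cardinal.mk_eq_zero X
    rw [this]
    exact Cardinal.zero_le _
  -- Step 1 : a θ-dense set of size ≤ 2 ^ κ
  have hTcard : #((Order.succ ((2 : Cardinal.{u}) ^ κ)).ord.ToType) = Order.succ ((2 : Cardinal.{u}) ^ κ) := by
    rw [Cardinal.mk_toType, Cardinal.card_ord]
  have hικ : #(κ.ord.ToType) = κ := by rw [Cardinal.mk_toType, Cardinal.card_ord]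
  have hιne : Nonempty (κ.ord.ToType) := Cardinal.mk_ne_zero_iff.1
    (by rw [hικ]; exact (aleph0_pos.trans_le hκ).ne')
  have hπ : ∀ z : X, ∃ e : κ.ord.ToType → Set X,
      (∀ i, IsOpen (e i) ∧ (e i).Nonempty) ∧
      (∀ V : Set X, IsOpen V → z ∈ V → ∃ i, e i ⊆ V) := by
    intro z
    obtain ⟨B, hB, hBcard⟩ := exists_small_piBase z
    have hBne : B.Nonempty := by
      obtain ⟨U, hU, -⟩ := hB.2 univ isOpen_univ (mem_univ z)
      exact ⟨U, hU⟩
    haveI : Nonempty ↥B := hBne.to_subtype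
    have hle : #↥B ≤ #(κ.ord.ToType) := by rw [hικ]; exact hBcard.trans hpichκ
    obtain ⟨f⟩ := (Cardinal.le_def _ _).1 hle
    have hsurj : Function.Surjective (Function.invFun (⇑f)) :=
      Function.invFun_surjective f.injective
    refine ⟨fun i => ((Function.invFun (⇑f) i : ↥B) : Set X),
      fun i => hB.1 _ (Subtype.mem _), ?_⟩
    intro V hV hzV
    obtain ⟨U, hU, hUV⟩ := hB.2 V hV hzV
    obtain ⟨i, hi⟩ := hsurj ⟨U, hU⟩
    refine ⟨i, ?_⟩
    show ((Function.invFun (⇑f) i : ↥B) : Set X) ⊆ V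
    rw [hi]
    exact hUV
  obtain ⟨D, hDcard, hDdense⟩ := exists_theta_dense_aux
    (T := (Order.succ ((2 : Cardinal.{u}) ^ κ)).ord.ToType) (ι := κ.ord.ToType) κ hκ
    (fun 𝒰 h1 h2 => le_trans (mk_le_cellularity h1 h2) hcellκ) hικ.le hιne hπ
    (fun t => Order.lt_succ_iff.1 (Cardinal.mk_Iio_ord_toType t))
    (le_of_eq hTcard.symm)
  -- Step 2 : homogeneity and the n-Urysohn property
  obtain ⟨p⟩ := hX0
  obtain ⟨Bp, hBp, hBpcard⟩ := exists_small_piBase p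
  choose h hp using fun x : X => hhom p x
  have himg : ∀ (x : X) (B : ↥Bp), IsOpen ((h x) '' B.1) ∧ ((h x) '' B.1).Nonempty := by
    intro x B
    obtain ⟨hBo, hBne⟩ := hBp.1 B.1 B.2
    exact ⟨(Homeomorph.isOpen_image (h x)).2 hBo, hBne.image _⟩
  have hne : ∀ (x : X) (B : ↥Bp), (closure ((h x) '' B.1) ∩ D).Nonempty := fun x B =>
    hDdense _ (himg x B).1 (himg x B).2
  set G : X → (↥Bp → ↥D) := fun x B => ⟨(hne x B).some, (hne x B).some_mem.2⟩ with hGdef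
  have hGmem : ∀ (x : X) (B : ↥Bp), ((G x B : X)) ∈ closure ((h x) '' B.1) := fun x B =>
    (hne x B).some_mem.1
  have i0 : Fin n := ⟨0, by omega⟩
  -- fibers of G have at most n - 1 points
  have hfiber : ∀ g : ↥Bp → ↥D, #{x : X // G x = g} ≤ ((n - 1 : ℕ) : Cardinal.{u}) := by
    intro g
    by_contra hbig
    push_neg at hbig
    have hnle : ((n : ℕ) : Cardinal.{u}) ≤ #{x : X // G x = g} := by
      have h4 : ((n : ℕ) : Cardinal.{u}) = Order.succ (((n - 1 : ℕ) : Cardinal.{u})) := by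
        rw [← Cardinal.nat_succ]
        congr 1
        omega
      rw [h4]
      exact Order.succ_le_of_lt hbig
    have hlift : Cardinal.lift.{u} #(Fin n) ≤ Cardinal.lift.{0} #{x : X // G x = g} := by
      rw [Cardinal.mk_fin, Cardinal.lift_natCast, Cardinal.lift_uzero]
      exact hnle
    obtain ⟨f0⟩ := Cardinal.lift_mk_le'.1 hlift
    set f : Fin n ↪ X := f0.trans (Function.Embedding.subtype _) with hfdef
    have hfib : ∀ i, G (f i) = g := fun i => (f0 i).2
    obtain ⟨U, hU, hUempty⟩ := hX f
    have hVopen : IsOpen (⋂ i, (h (f i)) ⁻¹' (U i)) := isOpen_iInter_of_finite fun i =>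
      (hU i).1.preimage (h (f i)).continuous
    have hpV : p ∈ ⋂ i, (h (f i)) ⁻¹' (U i) := by
      refine mem_iInter.2 fun i => ?_
      rw [mem_preimage, hp (f i)]
      exact (hU i).2
    obtain ⟨B, hBmem, hBV⟩ := hBp.2 _ hVopen hpV
    have hz : ∀ i : Fin n, ((G (f i0) ⟨B, hBmem⟩ : X)) ∈ closure (U i) := by
      intro i
      have h1 : (G (f i) ⟨B, hBmem⟩ : X) ∈ closure ((h (f i)) '' B) := hGmem (f i) ⟨B, hBmem⟩
      have h2 : G (f i) = G (f i0) := by rw [hfib i, hfib i0]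
      have h3 : (h (f i)) '' B ⊆ U i := by
        refine subset_trans (image_mono (hBV.trans (iInter_subset _ i))) ?_
        exact image_preimage_subset _ _
      rw [h2] at h1
      exact closure_mono h3 h1
    have hmem : ((G (f i0) ⟨B, hBmem⟩ : X)) ∈ ⋂ i, closure (U i) := mem_iInter.2 hz
    rw [hUempty] at hmem
    exact hmem
  -- counting
  have hcard : #X ≤ #(↥Bp → ↥D) * ((n - 1 : ℕ) : Cardinal.{u}) := by
    have e1 : #X = Cardinal.sum (fun g : ↥Bp → ↥D => #{x : X // G x = g}) := by
      rw [← Cardinal.mk_sigma]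
      exact Cardinal.mk_congr (Equiv.sigmaFiberEquiv G).symm
    rw [e1, ← Cardinal.sum_const']
    exact Cardinal.sum_le_sum _ _ hfiber
  have hBpD : #(↥Bp → ↥D) ≤ 2 ^ κ := by
    calc #(↥Bp → ↥D) = Cardinal.lift.{u} #↥D ^ Cardinal.lift.{u} #↥Bp :=
          Cardinal.mk_arrow _ _
      _ = #↥D ^ #↥Bp := by rw [Cardinal.lift_id, Cardinal.lift_id]
      _ ≤ (2 ^ κ) ^ #↥Bp := Cardinal.power_le_power_right hDcard
      _ ≤ (2 ^ κ) ^ κ := Cardinal.power_le_power_left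
          (Cardinal.power_ne_zero _ two_ne_zero) (hBpcard.trans hpichκ)
      _ = 2 ^ (κ * κ) := (Cardinal.power_mul).symm
      _ = 2 ^ κ := by rw [Cardinal.mul_eq_self hκ]
  refine le_trans hcard ?_
  calc #(↥Bp → ↥D) * ((n - 1 : ℕ) : Cardinal.{u}) ≤ (2 ^ κ) * (2 ^ κ) :=
        mul_le_mul' hBpD (le_trans (le_of_lt (Cardinal.nat_lt_aleph0 _))
          (hκ.trans (Cardinal.cantor κ).le))
    _ = 2 ^ κ := by rw [← Cardinal.power_add, Cardinal.add_eq_self hκ]
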